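/- Let n ∈ ℕ and x : Fin n → Bool. Define the amplitude function ψ_x : (Fin n → Fin 4) → ℂ by ψ_x(z) = ∏_{i : Fin n} a_i(z i), where a_i(b) = (√2)⁻¹ if x i = true and b ∈ {0, 1}, a_i(b) = 1 if x i = false and b = 2, and a_i(b) = 0 otherwise. Let A be the set of strings z : Fin n → Fin 4 such that z i ∈ {0, 1, 2} for every i and it is not the case that both the value 0 and the value 1 occur among the z i. Then ψ_x(z) = 0 for every z ∉ A if and only if the Hamming weight of x (the number of indices i with x i = true) is at most 1. -/
import Mathlib


/-- Amplitude function of the product state where active parties (`x i = true`)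
hold `(|0̂⟩ + |1̂⟩)/√2` and inactive parties hold `|∅⟩ = |2⟩`. -/
noncomputable def psiAmp (n : ℕ) (x : Fin n → Bool) (z : Fin n → Fin 4) : ℂ :=
  ∏ i, (if x i = true ∧ (z i = 0 ∨ z i = 1) then (Real.sqrt 2 : ℂ)⁻¹
        else if x i = false ∧ z i = 2 then 1 else 0)

lemma sqrt2_inv_ne : ((Real.sqrt 2 : ℂ))⁻¹ ≠ 0 := by
  simp [Real.sqrt_eq_zero']

/-- `ψ_x` is supported on the consistent set `A` iff the Hamming weight of `x` is at most 1. -/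
theorem stmt0 (n : ℕ) (x : Fin n → Bool) :
    (∀ z : Fin n → Fin 4,
        z ∉ {z : Fin n → Fin 4 | (∀ i, z i = 0 ∨ z i = 1 ∨ z i = 2) ∧
              ¬ ((∃ i, z i = 0) ∧ (∃ i, z i = 1))} →
        psiAmp n x z = 0)
    ↔ (Finset.univ.filter (fun i => x i = true)).card ≤ 1 := by
  constructor
  · intro h
    rw [Finset.card_le_one]
    intro i hi j hj
    by_contra hij
    simp only [Finset.mem_filter] at hi hj
    set z : Fin n → Fin 4 :=
      fun k => if k = i then 0 else if k = j then 1 else if x k then 0 else 2 with hzdef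
    have hzi : z i = 0 := by simp [hzdef]
    have hzj : z j = 1 := by simp [hzdef, Ne.symm hij]
    have hznot : z ∉ {z : Fin n → Fin 4 | (∀ i, z i = 0 ∨ z i = 1 ∨ z i = 2) ∧
              ¬ ((∃ i, z i = 0) ∧ (∃ i, z i = 1))} := by
      intro hmem
      exact hmem.2 ⟨⟨i, hzi⟩, ⟨j, hzj⟩⟩
    have hzero := h z hznot
    have hne : psiAmp n x z ≠ 0 := by
      unfold psiAmp
      rw [Finset.prod_ne_zero_iff]
      intro k _
      by_cases hk : x k = true
      · have hzk : z k = 0 ∨ z k = 1 := by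
          by_cases h1 : k = i
          · left; simp [h1, hzi]
          · by_cases h2 : k = j
            · right; simp [h2, hzj]
            · left; simp [hzdef, h1, h2, hk]
        simp only [hk, hzk, true_and, if_pos]
        exact sqrt2_inv_ne
      · have hkf : x k = false := by simpa using hk
        have h1 : k ≠ i := fun e => by rw [e] at hkf; rw [hi.2] at hkf; exact Bool.noConfusion hkf
        have h2 : k ≠ j := fun e => by rw [e] at hkf; rw [hj.2] at hkf; exact Bool.noConfusion hkf
        have hzk : z k = 2 := by simp [hzdef, h1, h2, hkf]
        simp [hk, hkf, hzk]
    exact hne hzero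
  · intro hcard z hz
    by_contra hne
    rw [psiAmp] at hne
    replace hne := Finset.prod_ne_zero_iff.mp hne
    apply hz
    have key : ∀ k, (x k = true ∧ (z k = 0 ∨ z k = 1)) ∨ (x k = false ∧ z k = 2) := by
      intro k
      have := hne k (Finset.mem_univ k)
      by_cases h1 : x k = true ∧ (z k = 0 ∨ z k = 1)
      · exact Or.inl h1
      · by_cases h2 : x k = false ∧ z k = 2
        · exact Or.inr h2
        · simp [h1, h2] at this
    constructor
    · intro k
      rcases key k with ⟨_, h | h⟩ | ⟨_, h⟩
      · exact Or.inl h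
      · exact Or.inr (Or.inl h)
      · exact Or.inr (Or.inr h)
    · rintro ⟨⟨i, hi⟩, ⟨j, hj⟩⟩
      have hxi : x i = true := by
        rcases key i with ⟨h, _⟩ | ⟨_, h⟩
        · exact h
        · rw [hi] at h; exact absurd h (by decide)
      have hxj : x j = true := by
        rcases key j with ⟨h, _⟩ | ⟨_, h⟩
        · exact h
        · rw [hj] at h; exact absurd h (by decide)
      have hij : i ≠ j := fun e => by rw [e, hj] at hi; exact absurd hi (by decide)
      rw [Finset.card_le_one] at hcard
      exact hij (hcard i (by simp [hxi]) j (by simp [hxj]))
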